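/- arXiv:1003.2747 — 4 statements merged into one kernel-verified Lean document; each statement's English description precedes it below -/
import Mathlib

section
/- Let n ≥ 1, let ξ₀ ∈ ℝ^n be nonzero, and let x, x', η ∈ ℝ^n. Define ψ(w) = (|ξ₀|/(2π))^{n/2} exp(i ξ₀·w − |ξ₀||w|²). Then | ∫_{ℝ^n} e^{−i η·u} ψ(x−u) conj(ψ(x'−u)) du | = (|ξ₀|/(8π))^{n/2} exp( −|η|²/(8|ξ₀|) − |ξ₀||x−x'|²/2 ). -/
open MeasureTheory

/-- The continuous-center complex Gaussian `ψ` with frequency center `ξ₀`. -/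
noncomputable def framePsi (n : ℕ) (ξ₀ : EuclideanSpace ℝ (Fin n))
    (w : EuclideanSpace ℝ (Fin n)) : ℂ :=
  (((‖ξ₀‖ / (2 * Real.pi)) ^ ((n : ℝ) / 2) : ℝ) : ℂ) *
    Complex.exp (Complex.I * ((inner ℝ ξ₀ w : ℝ) : ℂ) - ((‖ξ₀‖ * ‖w‖ ^ 2 : ℝ) : ℂ))

/-- The modulus of the Fourier transform (in the translation variable) of the product of two
translated complex Gaussians, from the proof of Lemma 2. -/
theorem fourier_of_gaussian_product (n : ℕ) (hn : 1 ≤ n)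
    (ξ₀ : EuclideanSpace ℝ (Fin n)) (hξ₀ : ξ₀ ≠ 0)
    (x x' η : EuclideanSpace ℝ (Fin n)) :
    ‖∫ u, Complex.exp (-(Complex.I * ((inner ℝ η u : ℝ) : ℂ))) *
        (framePsi n ξ₀ (x - u) * (starRingEnd ℂ) (framePsi n ξ₀ (x' - u)))‖ =
      (‖ξ₀‖ / (8 * Real.pi)) ^ ((n : ℝ) / 2) *
        Real.exp (-‖η‖ ^ 2 / (8 * ‖ξ₀‖) - ‖ξ₀‖ * ‖x - x'‖ ^ 2 / 2) := by
  have ha : 0 < ‖ξ₀‖ := norm_pos_iff.mpr hξ₀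
  set a : ℝ := ‖ξ₀‖ with ha_def
  set m : EuclideanSpace ℝ (Fin n) := (2:ℝ)⁻¹ • (x + x') with hm
  set C : ℝ := (a / (2 * Real.pi)) ^ ((n:ℝ)/2) with hC
  set E3 : ℂ := Complex.I * ((inner ℝ ξ₀ (x - x') : ℝ) : ℂ)
      - ((a * ‖x - x'‖^2 / 2 : ℝ) : ℂ) - Complex.I * ((inner ℝ η m : ℝ) : ℂ) with hE3
  set K : ℂ := ((C^2 : ℝ) : ℂ) * Complex.exp E3 with hK
  set g : EuclideanSpace ℝ (Fin n) → ℂ := fun v =>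
      Complex.exp (-(2 * (a:ℂ)) * (‖v‖:ℂ)^2 + (-Complex.I) * ((inner ℝ η v : ℝ):ℂ)) with hg
  -- geometric identity
  have hnormid : ∀ u : EuclideanSpace ℝ (Fin n),
      ‖x - u‖^2 + ‖x' - u‖^2 = ‖x - x'‖^2/2 + 2*‖u - m‖^2 := by
    intro u
    have h1 : x - u = (2:ℝ)⁻¹ • (x - x') + (m - u) := by rw [hm]; module
    have h2 : ‖x' - u‖ = ‖(2:ℝ)⁻¹ • (x - x') - (m - u)‖ := by
      rw [show (2:ℝ)⁻¹ • (x - x') - (m - u) = -(x' - u) by rw [hm]; module, norm_neg]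
    have hp := parallelogram_law_with_norm ℝ ((2:ℝ)⁻¹ • (x - x')) (m - u)
    have hs : ‖(2:ℝ)⁻¹ • (x - x')‖ = (2:ℝ)⁻¹ * ‖x - x'‖ := by
      rw [norm_smul]; simp
    have hmu : ‖m - u‖ = ‖u - m‖ := norm_sub_rev _ _
    rw [h1, h2]
    rw [hs, hmu] at hp
    linear_combination hp
  have key : ∀ u : EuclideanSpace ℝ (Fin n),
      Complex.exp (-(Complex.I * ((inner ℝ η u : ℝ) : ℂ))) *
        (framePsi n ξ₀ (x - u) * (starRingEnd ℂ) (framePsi n ξ₀ (x' - u)))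
      = K * g (u - m) := by
    intro u
    have r1 : (inner ℝ ξ₀ (x - u) : ℝ) - (inner ℝ ξ₀ (x' - u) : ℝ) = (inner ℝ ξ₀ (x - x') : ℝ) := by
      simp only [inner_sub_right]; ring
    have r2 : (inner ℝ η m : ℝ) + (inner ℝ η (u - m) : ℝ) = (inner ℝ η u : ℝ) := by
      simp only [inner_sub_right]; ring
    have r3 := hnormid u
    have hconj : (starRingEnd ℂ) (framePsi n ξ₀ (x' - u)) =
        (C : ℂ) * Complex.exp (-Complex.I * ((inner ℝ ξ₀ (x' - u) : ℝ) : ℂ)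
          - ((a * ‖x' - u‖^2 : ℝ) : ℂ)) := by
      rw [framePsi, map_mul, Complex.conj_ofReal, ← Complex.exp_conj]
      congr 2
      rw [map_sub, map_mul, Complex.conj_I, Complex.conj_ofReal, Complex.conj_ofReal]
    rw [hconj, framePsi, hK, hg]
    rw [show ((‖ξ₀‖ / (2 * Real.pi)) ^ ((n : ℝ) / 2) : ℝ) = C from rfl]
    rw [show ((C^2 : ℝ) : ℂ) = (C:ℂ) * (C:ℂ) by push_cast; ring]
    have hexp : (-(Complex.I * ((inner ℝ η u : ℝ) : ℂ)))
        + ((Complex.I * ((inner ℝ ξ₀ (x - u) : ℝ) : ℂ) - ((a * ‖x - u‖^2 : ℝ) : ℂ))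
          + (-Complex.I * ((inner ℝ ξ₀ (x' - u) : ℝ) : ℂ) - ((a * ‖x' - u‖^2 : ℝ) : ℂ)))
        = E3 + (-(2 * (a:ℂ)) * (‖u - m‖:ℂ)^2 + (-Complex.I) * ((inner ℝ η (u - m) : ℝ):ℂ)) := by
      rw [hE3]
      rw [show ((‖u - m‖:ℂ))^2 = ((‖u - m‖^2 : ℝ) : ℂ) by push_cast; ring]
      rw [Complex.ext_iff]
      simp only [Complex.add_re, Complex.add_im, Complex.sub_re, Complex.sub_im,
        Complex.neg_re, Complex.neg_im, Complex.mul_re, Complex.mul_im,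
        Complex.I_re, Complex.I_im, Complex.ofReal_re, Complex.ofReal_im,
        Complex.re_ofNat, Complex.im_ofNat]
      constructor
      · linear_combination (-a) * r3
      · linear_combination r1 + r2
    calc Complex.exp (-(Complex.I * ((inner ℝ η u : ℝ) : ℂ))) *
          ((C:ℂ) * Complex.exp (Complex.I * ((inner ℝ ξ₀ (x - u) : ℝ) : ℂ)
              - ((a * ‖x - u‖^2 : ℝ) : ℂ)) *
            ((C:ℂ) * Complex.exp (-Complex.I * ((inner ℝ ξ₀ (x' - u) : ℝ) : ℂ)
              - ((a * ‖x' - u‖^2 : ℝ) : ℂ))))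
        = (C:ℂ) * (C:ℂ) * Complex.exp ((-(Complex.I * ((inner ℝ η u : ℝ) : ℂ)))
            + ((Complex.I * ((inner ℝ ξ₀ (x - u) : ℝ) : ℂ) - ((a * ‖x - u‖^2 : ℝ) : ℂ))
              + (-Complex.I * ((inner ℝ ξ₀ (x' - u) : ℝ) : ℂ)
                - ((a * ‖x' - u‖^2 : ℝ) : ℂ)))) := by
          rw [Complex.exp_add, Complex.exp_add]; ring
      _ = (C:ℂ) * (C:ℂ) * Complex.exp E3 *
            Complex.exp (-(2 * (a:ℂ)) * (‖u - m‖:ℂ)^2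
              + (-Complex.I) * ((inner ℝ η (u - m) : ℝ):ℂ)) := by
          rw [hexp, Complex.exp_add]; ring
  have hb : 0 < (2 * (a:ℂ)).re := by simp [ha]
  have hint : (∫ u, Complex.exp (-(Complex.I * ((inner ℝ η u : ℝ) : ℂ))) *
        (framePsi n ξ₀ (x - u) * (starRingEnd ℂ) (framePsi n ξ₀ (x' - u))))
      = K * ((Real.pi / (2 * (a:ℂ))) ^ ((Module.finrank ℝ (EuclideanSpace ℝ (Fin n)) : ℂ) / 2) *
          Complex.exp ((-Complex.I)^2 * (‖η‖:ℂ)^2 / (4 * (2 * (a:ℂ))))) := by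
    simp only [key]
    rw [integral_const_mul]
    congr 1
    rw [integral_sub_right_eq_self g m]
    exact GaussianFourier.integral_cexp_neg_mul_sq_norm_add hb (-Complex.I) η
  rw [hint]
  have hfr : Module.finrank ℝ (EuclideanSpace ℝ (Fin n)) = n := finrank_euclideanSpace_fin
  have hcpow : ‖((Real.pi : ℂ) / (2 * (a:ℂ))) ^ ((Module.finrank ℝ (EuclideanSpace ℝ (Fin n)) : ℂ) / 2)‖
      = (Real.pi / (2*a)) ^ ((n:ℝ)/2) := by
    have hpos : (0:ℝ) < Real.pi / (2*a) := by positivity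
    rw [show ((Real.pi : ℂ) / (2 * (a:ℂ))) = ((Real.pi / (2*a) : ℝ) : ℂ) by push_cast; ring]
    rw [Complex.norm_cpow_eq_rpow_re_of_pos hpos]
    congr 1
    rw [hfr]
    simp
  have hexpnorm : ‖Complex.exp ((-Complex.I)^2 * (‖η‖:ℂ)^2 / (4 * (2 * (a:ℂ))))‖
      = Real.exp (-‖η‖^2 / (8*a)) := by
    have hI : (-Complex.I)^2 = (-1 : ℂ) := by simp [Complex.I_sq]
    rw [show ((-Complex.I)^2 * (‖η‖:ℂ)^2 / (4 * (2 * (a:ℂ)))) = ((-‖η‖^2 / (8*a) : ℝ) : ℂ) by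
      rw [hI]; push_cast; ring]
    rw [Complex.norm_exp, Complex.ofReal_re]
  have h1 : ‖((C^2 : ℝ) : ℂ)‖ = C^2 := by
    rw [Complex.norm_real, Real.norm_eq_abs, abs_of_nonneg (sq_nonneg C)]
  have h2 : ‖Complex.exp E3‖ = Real.exp (-(a * ‖x - x'‖^2 / 2)) := by
    rw [Complex.norm_exp]
    congr 1
    rw [hE3]
    simp only [Complex.sub_re, Complex.mul_re, Complex.I_re, Complex.I_im,
      Complex.ofReal_re, Complex.ofReal_im]
    ring
  rw [hK]
  simp only [norm_mul]
  rw [h1, h2, hcpow, hexpnorm]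
  have hCsq : C^2 = (a / (2 * Real.pi)) ^ ((n:ℝ)/2) * (a / (2 * Real.pi)) ^ ((n:ℝ)/2) := by
    rw [hC]; ring
  have hbase : a / (2 * Real.pi) * (a / (2 * Real.pi) * (Real.pi / (2*a))) = a / (8 * Real.pi) := by
    have hπ : Real.pi ≠ 0 := Real.pi_ne_zero
    field_simp
    ring
  have hpow : C^2 * (Real.pi / (2*a)) ^ ((n:ℝ)/2) = (a / (8 * Real.pi)) ^ ((n:ℝ)/2) := by
    rw [hCsq, mul_assoc, ← Real.mul_rpow (by positivity) (by positivity),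
      ← Real.mul_rpow (by positivity) (by positivity), hbase]
  calc C^2 * Real.exp (-(a * ‖x - x'‖^2 / 2)) *
        ((Real.pi / (2*a)) ^ ((n:ℝ)/2) * Real.exp (-‖η‖^2 / (8*a)))
      = (C^2 * (Real.pi / (2*a)) ^ ((n:ℝ)/2)) *
        (Real.exp (-‖η‖^2 / (8*a)) * Real.exp (-(a * ‖x - x'‖^2 / 2))) := by ring
    _ = (a / (8 * Real.pi)) ^ ((n:ℝ)/2) * Real.exp (-‖η‖^2 / (8*a) - a * ‖x - x'‖^2 / 2) := by
        rw [hpow, ← Real.exp_add]; ring_nf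
end

section
/- Let n ≥ 1, let ξ₁, ξ₂ ∈ ℝ^n be nonzero, and let x₁, x₂ ∈ ℝ^n. Then | ∫_{ℝ^n} exp( i(x−x₂)·ξ₂ − i(x−x₁)·ξ₁ − |ξ₂||x−x₂|² − |ξ₁||x−x₁|² ) dx | = (π/(|ξ₁|+|ξ₂|))^{n/2} exp( −|ξ₂−ξ₁|²/(4(|ξ₁|+|ξ₂|)) ) exp( −(|ξ₁||ξ₂|/(|ξ₁|+|ξ₂|)) |x₂−x₁|² ). -/
open MeasureTheory

open scoped RealInnerProductSpace

/-- The exact modulus of the inner product of two complex Gaussian frame functions (without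
normalizing prefactors), from Section 2 of the paper. -/
theorem gaussian_inner_product_modulus (n : ℕ) (hn : 1 ≤ n)
    (ξ₁ ξ₂ : EuclideanSpace ℝ (Fin n)) (hξ₁ : ξ₁ ≠ 0) (hξ₂ : ξ₂ ≠ 0)
    (x₁ x₂ : EuclideanSpace ℝ (Fin n)) :
    ‖∫ x, Complex.exp
        (Complex.I * ((inner ℝ (x - x₂) ξ₂ : ℝ) : ℂ) - Complex.I * ((inner ℝ (x - x₁) ξ₁ : ℝ) : ℂ)
          - ((‖ξ₂‖ * ‖x - x₂‖ ^ 2 : ℝ) : ℂ) - ((‖ξ₁‖ * ‖x - x₁‖ ^ 2 : ℝ) : ℂ))‖ =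
      (Real.pi / (‖ξ₁‖ + ‖ξ₂‖)) ^ ((n : ℝ) / 2) *
        Real.exp (-‖ξ₂ - ξ₁‖ ^ 2 / (4 * (‖ξ₁‖ + ‖ξ₂‖))) *
        Real.exp (-(‖ξ₁‖ * ‖ξ₂‖ / (‖ξ₁‖ + ‖ξ₂‖)) * ‖x₂ - x₁‖ ^ 2) := by
  have ha₁ : (0:ℝ) < ‖ξ₁‖ := norm_pos_iff.mpr hξ₁
  have ha₂ : (0:ℝ) < ‖ξ₂‖ := norm_pos_iff.mpr hξ₂
  set a₁ := ‖ξ₁‖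
  set a₂ := ‖ξ₂‖
  have hb : (0:ℝ) < a₁ + a₂ := by positivity
  have hb' : (a₁ + a₂ : ℝ) ≠ 0 := hb.ne'
  set m : EuclideanSpace ℝ (Fin n) := (a₁ + a₂)⁻¹ • (a₁ • x₁ + a₂ • x₂) with hm
  set C : ℂ := Complex.I * ((⟪m - x₂, ξ₂⟫ : ℝ) : ℂ) - Complex.I * ((⟪m - x₁, ξ₁⟫ : ℝ) : ℂ)
      - ((a₁ * a₂ / (a₁ + a₂) * ‖x₂ - x₁‖ ^ 2 : ℝ) : ℂ) with hC
  have key : ∀ x : EuclideanSpace ℝ (Fin n),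
      Complex.I * ((inner ℝ (x - x₂) ξ₂ : ℝ) : ℂ) - Complex.I * ((inner ℝ (x - x₁) ξ₁ : ℝ) : ℂ)
          - ((a₂ * ‖x - x₂‖ ^ 2 : ℝ) : ℂ) - ((a₁ * ‖x - x₁‖ ^ 2 : ℝ) : ℂ)
        = (-(↑(a₁ + a₂) : ℂ) * (‖x - m‖:ℂ) ^ 2
            + Complex.I * ((⟪ξ₂ - ξ₁, x - m⟫ : ℝ) : ℂ)) + C := by
    intro x
    have him : (inner ℝ (x - x₂) ξ₂ : ℝ) - (inner ℝ (x - x₁) ξ₁ : ℝ)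
        = ⟪ξ₂ - ξ₁, x - m⟫ + (⟪m - x₂, ξ₂⟫ - ⟪m - x₁, ξ₁⟫) := by
      simp only [inner_sub_left, inner_sub_right]
      rw [real_inner_comm ξ₂ x, real_inner_comm ξ₁ x, real_inner_comm ξ₂ m,
        real_inner_comm ξ₁ m]
      ring
    have hre : -(a₂ * ‖x - x₂‖ ^ 2) - a₁ * ‖x - x₁‖ ^ 2
        = -((a₁ + a₂) * ‖x - m‖ ^ 2) - a₁ * a₂ / (a₁ + a₂) * ‖x₂ - x₁‖ ^ 2 := by
      simp only [← real_inner_self_eq_norm_sq, hm]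
      simp only [inner_sub_left, inner_sub_right, inner_add_left, inner_add_right,
        real_inner_smul_left, real_inner_smul_right]
      rw [real_inner_comm x x₁, real_inner_comm x x₂, real_inner_comm x₁ x₂]
      field_simp
      ring
    have lhs_eq : Complex.I * ((inner ℝ (x - x₂) ξ₂ : ℝ) : ℂ)
          - Complex.I * ((inner ℝ (x - x₁) ξ₁ : ℝ) : ℂ)
          - ((a₂ * ‖x - x₂‖ ^ 2 : ℝ) : ℂ) - ((a₁ * ‖x - x₁‖ ^ 2 : ℝ) : ℂ)
        = Complex.I * (((inner ℝ (x - x₂) ξ₂ : ℝ) - (inner ℝ (x - x₁) ξ₁ : ℝ) : ℝ) : ℂ)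
          + ((-(a₂ * ‖x - x₂‖ ^ 2) - a₁ * ‖x - x₁‖ ^ 2 : ℝ) : ℂ) := by
      push_cast; ring
    rw [lhs_eq, him, hre, hC]
    push_cast
    ring
  have hint : (∫ x : EuclideanSpace ℝ (Fin n), Complex.exp
        (Complex.I * ((inner ℝ (x - x₂) ξ₂ : ℝ) : ℂ) - Complex.I * ((inner ℝ (x - x₁) ξ₁ : ℝ) : ℂ)
          - ((a₂ * ‖x - x₂‖ ^ 2 : ℝ) : ℂ) - ((a₁ * ‖x - x₁‖ ^ 2 : ℝ) : ℂ)))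
      = ((Real.pi / ((a₁ + a₂:ℝ):ℂ)) ^ ((n:ℂ) / 2)
          * Complex.exp (Complex.I ^ 2 * (‖ξ₂ - ξ₁‖:ℂ) ^ 2 / (4 * ((a₁+a₂:ℝ):ℂ))))
        * Complex.exp C := by
    calc (∫ x : EuclideanSpace ℝ (Fin n), Complex.exp
        (Complex.I * ((inner ℝ (x - x₂) ξ₂ : ℝ) : ℂ) - Complex.I * ((inner ℝ (x - x₁) ξ₁ : ℝ) : ℂ)
          - ((a₂ * ‖x - x₂‖ ^ 2 : ℝ) : ℂ) - ((a₁ * ‖x - x₁‖ ^ 2 : ℝ) : ℂ)))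
        = ∫ x : EuclideanSpace ℝ (Fin n), Complex.exp
            (-(↑(a₁ + a₂) : ℂ) * (‖x - m‖:ℂ) ^ 2
              + Complex.I * ((⟪ξ₂ - ξ₁, x - m⟫ : ℝ) : ℂ)) * Complex.exp C := by
          congr 1; ext x; rw [key x, Complex.exp_add]
      _ = (∫ x : EuclideanSpace ℝ (Fin n), Complex.exp
            (-(↑(a₁ + a₂) : ℂ) * (‖x - m‖:ℂ) ^ 2
              + Complex.I * ((⟪ξ₂ - ξ₁, x - m⟫ : ℝ) : ℂ))) * Complex.exp C :=
          integral_mul_const _ _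
      _ = (∫ v : EuclideanSpace ℝ (Fin n), Complex.exp
            (-(↑(a₁ + a₂) : ℂ) * (‖v‖:ℂ) ^ 2
              + Complex.I * ((⟪ξ₂ - ξ₁, v⟫ : ℝ) : ℂ))) * Complex.exp C := by
          rw [integral_sub_right_eq_self (fun v : EuclideanSpace ℝ (Fin n) => Complex.exp
            (-(↑(a₁ + a₂) : ℂ) * (‖v‖:ℂ) ^ 2 + Complex.I * ((⟪ξ₂ - ξ₁, v⟫ : ℝ) : ℂ))) m]
      _ = ((Real.pi / ((a₁ + a₂:ℝ):ℂ)) ^ ((n:ℂ) / 2)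
          * Complex.exp (Complex.I ^ 2 * (‖ξ₂ - ξ₁‖:ℂ) ^ 2 / (4 * ((a₁+a₂:ℝ):ℂ))))
        * Complex.exp C := by
          rw [GaussianFourier.integral_cexp_neg_mul_sq_norm_add
            (show (0:ℝ) < ((a₁+a₂:ℝ):ℂ).re by simpa using hb) Complex.I (ξ₂ - ξ₁)]
          norm_num [finrank_euclideanSpace_fin]
  rw [hint]
  rw [norm_mul, norm_mul]
  have h1 : ‖((Real.pi / ((a₁ + a₂:ℝ):ℂ)) ^ ((n:ℂ) / 2))‖ = (Real.pi / (a₁ + a₂)) ^ ((n:ℝ)/2) := by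
    have hpos : (0:ℝ) < Real.pi / (a₁ + a₂) := div_pos Real.pi_pos hb
    rw [show ((Real.pi : ℂ) / ((a₁ + a₂:ℝ):ℂ)) = ((Real.pi / (a₁+a₂) : ℝ) : ℂ) by push_cast; ring]
    rw [Complex.norm_cpow_eq_rpow_re_of_pos hpos]
    norm_num
  have h2 : ‖Complex.exp (Complex.I ^ 2 * (‖ξ₂ - ξ₁‖:ℂ) ^ 2 / (4 * ((a₁+a₂:ℝ):ℂ)))‖
      = Real.exp (-‖ξ₂ - ξ₁‖ ^ 2 / (4 * (a₁ + a₂))) := by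
    rw [show (Complex.I ^ 2 * (‖ξ₂ - ξ₁‖:ℂ) ^ 2 / (4 * ((a₁+a₂:ℝ):ℂ)))
        = ((-‖ξ₂ - ξ₁‖ ^ 2 / (4 * (a₁ + a₂)) : ℝ) : ℂ) by push_cast; rw [Complex.I_sq]; ring]
    rw [Complex.norm_exp, Complex.ofReal_re]
  have h3 : ‖Complex.exp C‖ = Real.exp (-(a₁ * a₂ / (a₁ + a₂)) * ‖x₂ - x₁‖ ^ 2) := by
    rw [Complex.norm_exp, hC]
    congr 1
    simp only [Complex.sub_re, Complex.mul_re, Complex.I_re, Complex.I_im,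
      Complex.ofReal_re, Complex.ofReal_im]
    ring
  rw [h1, h2, h3]
end

section
/- Let n ≥ 1. There exists a constant C depending only on n such that for all nonzero ξ₁, ξ₂ ∈ ℝ^n and all x₁, x₂ ∈ ℝ^n: | ∫_{ℝ^n} |ξ₂|² |x−x₂|² exp( i(x−x₂)·ξ₂ − i(x−x₁)·ξ₁ − |ξ₂||x−x₂|² − |ξ₁||x−x₁|² ) dx | ≤ C (π/(|ξ₁|+|ξ₂|))^{n/2} ( |ξ₁−ξ₂|² + |ξ₁||ξ₂||x₁−x₂|² + |ξ₂| ) × exp( −|ξ₂−ξ₁|²/(4(|ξ₁|+|ξ₂|)) ) exp( −(|ξ₁||ξ₂|/(|ξ₁|+|ξ₂|)) |x₂−x₁|² ). -/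
open MeasureTheory
open Real

noncomputable section

noncomputable section

lemma integrable_pow_mul_cexp_aux (k : ℕ) {p : ℝ} (hp : 0 < p) (c : ℂ) :
    Integrable fun t : ℝ => (t : ℂ) ^ k * Complex.exp (-(p : ℂ) * t ^ 2 + c * t) := by
  have h2 : 0 < p / 2 := by linarith
  have hk : (-1 : ℝ) < (k : ℝ) := lt_of_lt_of_le (by norm_num) (Nat.cast_nonneg k)
  have hint : Integrable fun t : ℝ => Real.exp (c.re ^ 2 / (2 * p)) *
      |t ^ k * Real.exp (-(p / 2) * t ^ 2)| := by
    have := ((integrable_rpow_mul_exp_neg_mul_sq h2 hk).abs).const_mul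
      (Real.exp (c.re ^ 2 / (2 * p)))
    simpa [Real.rpow_natCast] using this
  refine Integrable.mono' hint ?_ ?_
  · apply Continuous.aestronglyMeasurable
    continuity
  · filter_upwards with t
    have hre : (-(p : ℂ) * (t:ℂ) ^ 2 + c * (t:ℂ)).re = -p * t ^ 2 + c.re * t := by
      simp [Complex.add_re, Complex.mul_re, ← Complex.ofReal_pow]
    have hnorm : ‖(t : ℂ) ^ k * Complex.exp (-(p : ℂ) * t ^ 2 + c * t)‖
        = |t| ^ k * Real.exp (-p * t ^ 2 + c.re * t) := by
      rw [norm_mul, Complex.norm_exp, hre, norm_pow]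
      simp
    rw [hnorm, abs_mul, _root_.abs_of_nonneg (Real.exp_pos _).le, _root_.abs_pow]
    rw [mul_comm (Real.exp _) _, mul_assoc, ← Real.exp_add]
    refine mul_le_mul_of_nonneg_left (Real.exp_le_exp.2 ?_) (by positivity)
    rw [← sub_nonneg]
    have h : -(p / 2) * t ^ 2 + c.re ^ 2 / (2 * p) - (-p * t ^ 2 + c.re * t)
        = (p * t - c.re) ^ 2 / (2 * p) := by field_simp; ring
    rw [h]
    positivity

lemma integral_cexp_lin {p : ℝ} (hp : 0 < p) (c : ℂ) :
    ∫ t : ℝ, Complex.exp (-(p : ℂ) * t ^ 2 + c * t)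
      = (Real.pi / p : ℂ) ^ (1/2 : ℂ) * Complex.exp (c ^ 2 / (4 * p)) := by
  have hb : (-(p:ℂ)).re < 0 := by simpa using hp
  have := integral_cexp_quadratic hb c 0
  simp only [add_zero, zero_sub, neg_neg] at this
  rw [this]
  congr 1
  have : (p:ℂ) ≠ 0 := by exact_mod_cast hp.ne'
  field_simp
lemma hasDerivAt_cexp_lin (p c : ℂ) (z : ℂ) :
    HasDerivAt (fun z : ℂ => Complex.exp (-p * z ^ 2 + c * z))
      ((-p * (2 * z) + c) * Complex.exp (-p * z ^ 2 + c * z)) z := by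
  have h : HasDerivAt (fun z : ℂ => -p * z ^ 2 + c * z) (-p * (2 * z) + c) z := by
    have h1 := (hasDerivAt_pow 2 z).const_mul (-p)
    have h2 := (hasDerivAt_id z).const_mul c
    simpa [pow_one, mul_one, Pi.add_def] using h1.add h2
  simpa [mul_comm] using h.cexp

lemma integral_mul_cexp_lin {p : ℝ} (hp : 0 < p) (c : ℂ) :
    ∫ t : ℝ, (t : ℂ) * Complex.exp (-(p : ℂ) * t ^ 2 + c * t)
      = c / (2 * p) * ∫ t : ℝ, Complex.exp (-(p : ℂ) * t ^ 2 + c * t) := by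
  set f : ℝ → ℂ := fun t => Complex.exp (-(p : ℂ) * t ^ 2 + c * t) with hf
  have I0 : Integrable f := by simpa [hf] using integrable_pow_mul_cexp_aux 0 hp c
  have I1 : Integrable fun t : ℝ => (t : ℂ) * f t := by
    simpa [hf] using integrable_pow_mul_cexp_aux 1 hp c
  have hderiv : ∀ t : ℝ, HasDerivAt (fun t : ℝ => f t)
      (c * f t - 2 * p * ((t : ℂ) * f t)) t := by
    intro t
    have := (hasDerivAt_cexp_lin (p : ℂ) c (t : ℂ)).comp_ofReal
    convert this using 1
    simp [hf]; ring
  have hint' : Integrable fun t : ℝ => c * f t - 2 * (p : ℂ) * ((t : ℂ) * f t) :=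
    (I0.const_mul c).sub (I1.const_mul (2 * (p : ℂ)))
  have h0 : ∫ t : ℝ, (c * f t - 2 * (p : ℂ) * ((t : ℂ) * f t)) = 0 :=
    integral_eq_zero_of_hasDerivAt_of_integrable hderiv hint' I0
  rw [integral_sub (I0.const_mul c) (I1.const_mul (2 * (p : ℂ))),
    integral_const_mul, integral_const_mul] at h0
  have hp' : (p : ℂ) ≠ 0 := by exact_mod_cast hp.ne'
  have h2p : (2 * (p : ℂ)) ≠ 0 := by simp [hp']
  show (∫ t : ℝ, (t : ℂ) * f t) = c / (2 * (p : ℂ)) * ∫ t : ℝ, f t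
  rw [div_mul_eq_mul_div, eq_div_iff h2p]
  linear_combination -h0
lemma integral_sq_mul_cexp_lin {p : ℝ} (hp : 0 < p) (c : ℂ) :
    ∫ t : ℝ, (t : ℂ) ^ 2 * Complex.exp (-(p : ℂ) * t ^ 2 + c * t)
      = (c ^ 2 / (4 * p ^ 2) + 1 / (2 * p)) *
        ∫ t : ℝ, Complex.exp (-(p : ℂ) * t ^ 2 + c * t) := by
  set f : ℝ → ℂ := fun t => Complex.exp (-(p : ℂ) * t ^ 2 + c * t) with hf
  have I0 : Integrable f := by simpa [hf] using integrable_pow_mul_cexp_aux 0 hp c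
  have I1 : Integrable fun t : ℝ => (t : ℂ) * f t := by
    simpa [hf] using integrable_pow_mul_cexp_aux 1 hp c
  have I2 : Integrable fun t : ℝ => (t : ℂ) ^ 2 * f t := by
    simpa [hf] using integrable_pow_mul_cexp_aux 2 hp c
  have hderiv : ∀ t : ℝ, HasDerivAt (fun t : ℝ => (t : ℂ) * f t)
      (f t + c * ((t : ℂ) * f t) - 2 * p * ((t : ℂ) ^ 2 * f t)) t := by
    intro t
    have hG : HasDerivAt (fun z : ℂ => z * Complex.exp (-(p : ℂ) * z ^ 2 + c * z))
        (1 * Complex.exp (-(p : ℂ) * (t:ℂ) ^ 2 + c * (t:ℂ)) +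
          (t : ℂ) * ((-(p:ℂ) * (2 * (t:ℂ)) + c) * Complex.exp (-(p : ℂ) * (t:ℂ) ^ 2 + c * (t:ℂ))))
        (t : ℂ) := (hasDerivAt_id (t:ℂ)).mul (hasDerivAt_cexp_lin (p : ℂ) c (t:ℂ))
    have := hG.comp_ofReal
    convert this using 1
    simp [hf]; ring
  have hint' : Integrable fun t : ℝ =>
      f t + c * ((t : ℂ) * f t) - 2 * (p : ℂ) * ((t : ℂ) ^ 2 * f t) :=
    (I0.add (I1.const_mul c)).sub (I2.const_mul (2 * (p : ℂ)))
  have h0 : ∫ t : ℝ, (f t + c * ((t : ℂ) * f t) - 2 * (p : ℂ) * ((t : ℂ) ^ 2 * f t)) = 0 :=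
    integral_eq_zero_of_hasDerivAt_of_integrable hderiv hint' I1
  have hA : Integrable (fun t : ℝ => f t + c * ((t : ℂ) * f t)) := I0.add (I1.const_mul c)
  have hB : Integrable (fun t : ℝ => 2 * (p : ℂ) * ((t : ℂ) ^ 2 * f t)) :=
    I2.const_mul (2 * (p : ℂ))
  have hC : Integrable (fun t : ℝ => c * ((t : ℂ) * f t)) := I1.const_mul c
  rw [integral_sub hA hB, integral_add I0 hC, integral_const_mul, integral_const_mul,
    integral_mul_cexp_lin hp c] at h0
  have hp' : (p : ℂ) ≠ 0 := by exact_mod_cast hp.ne'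
  show (∫ t : ℝ, (t : ℂ) ^ 2 * f t)
      = (c ^ 2 / (4 * (p:ℂ) ^ 2) + 1 / (2 * (p:ℂ))) * ∫ t : ℝ, f t
  have h2p : (2 * (p : ℂ)) ≠ 0 := by simp [hp']
  rw [show (∫ t : ℝ, Complex.exp (-(p:ℂ) * (t:ℂ) ^ 2 + c * (t:ℂ))) = ∫ t : ℝ, f t from rfl] at h0
  field_simp at h0 ⊢
  linear_combination (-2 : ℂ) * h0
lemma key_pi (n : ℕ) {p : ℝ} (hp : 0 < p) (c : Fin n → ℂ) :
    ∫ v : Fin n → ℝ, (∑ j, ((v j : ℂ)) ^ 2) *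
        Complex.exp (∑ i, (-(p : ℂ) * (v i) ^ 2 + c i * (v i)))
      = ((∑ i, c i ^ 2) / (4 * p ^ 2) + n / (2 * p)) *
        (((Real.pi / p : ℂ) ^ (1/2 : ℂ)) ^ n *
          Complex.exp ((∑ i, c i ^ 2) / (4 * p))) := by
  set g : Fin n → Fin n → ℝ → ℂ :=
    fun j i t => (if i = j then (t : ℂ) ^ 2 else 1) *
      Complex.exp (-(p : ℂ) * t ^ 2 + c i * t) with hg
  have hint : ∀ j i, Integrable (g j i) := by
    intro j i
    rcases eq_or_ne i j with h | h
    · simp only [hg, h, eq_self_iff_true, if_true]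
      exact integrable_pow_mul_cexp_aux 2 hp (c j)
    · simp only [hg, if_neg h, one_mul]
      simpa only [pow_zero, one_mul] using integrable_pow_mul_cexp_aux 0 hp (c i)
  have step1 : ∀ v : Fin n → ℝ,
      (∑ j, ((v j : ℂ)) ^ 2) * Complex.exp (∑ i, (-(p : ℂ) * (v i) ^ 2 + c i * (v i)))
        = ∑ j, ∏ i, g j i (v i) := by
    intro v
    rw [Complex.exp_sum, Finset.sum_mul]
    congr 1
    ext j
    rw [hg]
    simp only []
    rw [Finset.prod_mul_distrib]
    congr 1
    simp
  simp_rw [step1]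
  rw [integral_finset_sum (μ := volume) _ (fun j _ => Integrable.fintype_prod (fun i => hint j i))]
  have step2 : ∀ j, (∫ v : Fin n → ℝ, ∏ i, g j i (v i))
      = (c j ^ 2 / (4 * p ^ 2) + 1 / (2 * p)) *
        ∏ i, ((Real.pi / p : ℂ) ^ (1/2 : ℂ) * Complex.exp (c i ^ 2 / (4 * p))) := by
    intro j
    rw [show (volume : Measure (Fin n → ℝ)) = Measure.pi fun _ => volume from rfl,
      integral_fintype_prod_eq_prod (g j)]
    have h1 : ∀ i, (∫ t : ℝ, g j i t)
        = (if i = j then (c i ^ 2 / (4 * (p:ℂ) ^ 2) + 1 / (2 * (p:ℂ))) else 1) *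
          ((Real.pi / p : ℂ) ^ (1/2 : ℂ) * Complex.exp (c i ^ 2 / (4 * p))) := by
      intro i
      rcases eq_or_ne i j with h | h
      · simp only [hg, h, eq_self_iff_true, if_true]
        rw [integral_sq_mul_cexp_lin hp (c j), integral_cexp_lin hp (c j)]
      · simp only [hg, if_neg h, one_mul]
        rw [integral_cexp_lin hp (c i)]
    simp_rw [h1]
    rw [Finset.prod_mul_distrib]
    congr 1
    simp
  simp_rw [step2]
  rw [← Finset.sum_mul]
  congr 1
  · rw [Finset.sum_add_distrib, Finset.sum_const, Finset.card_univ]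
    simp only [Fintype.card_fin, nsmul_eq_mul, Finset.sum_div]
    try ring
  · rw [Finset.prod_mul_distrib, Finset.prod_const, Finset.card_univ]
    rw [← Complex.exp_sum]
    simp [Finset.sum_div]
lemma euclid_norm_sq (n : ℕ) (z : EuclideanSpace ℝ (Fin n)) : ‖z‖ ^ 2 = ∑ i, z i ^ 2 := by
  rw [← real_inner_self_eq_norm_sq, PiLp.inner_apply]
  simp [RCLike.inner_apply, sq]

lemma euclid_inner (n : ℕ) (z z' : EuclideanSpace ℝ (Fin n)) :
    (inner ℝ z z' : ℝ) = ∑ i, z i * z' i := by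
  rw [PiLp.inner_apply]
  simp [RCLike.inner_apply, mul_comm]

lemma key_euclid (n : ℕ) {p : ℝ} (hp : 0 < p) (u w : EuclideanSpace ℝ (Fin n)) (S : ℂ)
    (hS : S = ((‖u‖ ^ 2 - ‖w‖ ^ 2 : ℝ) : ℂ) + 2 * Complex.I * ((inner ℝ u w : ℝ) : ℂ)) :
    ∫ y : EuclideanSpace ℝ (Fin n), ((‖y‖ ^ 2 : ℝ) : ℂ) *
        Complex.exp (-(p : ℂ) * ((‖y‖ ^ 2 : ℝ) : ℂ) + ((inner ℝ y u : ℝ) : ℂ)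
          + Complex.I * ((inner ℝ y w : ℝ) : ℂ))
      = (S / (4 * p ^ 2) + n / (2 * p)) *
        (((Real.pi / p : ℂ)) ^ (1/2 : ℂ)) ^ n * Complex.exp (S / (4 * p)) := by
  set c : Fin n → ℂ := fun i => ((u i : ℝ) : ℂ) + Complex.I * ((w i : ℝ) : ℂ) with hc
  have hSsum : ∑ i, c i ^ 2 = S := by
    rw [hS, euclid_norm_sq, euclid_norm_sq, euclid_inner]
    simp only [hc]
    push_cast
    rw [← Finset.sum_sub_distrib, Finset.mul_sum, ← Finset.sum_add_distrib]
    apply Finset.sum_congr rfl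
    intro i _
    linear_combination ((w i : ℝ) : ℂ) ^ 2 * Complex.I_sq
  have hMP : MeasurePreserving (MeasurableEquiv.toLp 2 (Fin n → ℝ)) :=
    (EuclideanSpace.volume_preserving_symm_measurableEquiv_toLp (Fin n)).symm
  rw [← hMP.integral_comp (MeasurableEquiv.measurableEmbedding _)]
  have hfun : ∀ v : Fin n → ℝ,
      ((‖(MeasurableEquiv.toLp 2 (Fin n → ℝ)) v‖ ^ 2 : ℝ) : ℂ) *
        Complex.exp (-(p : ℂ) * ((‖(MeasurableEquiv.toLp 2 (Fin n → ℝ)) v‖ ^ 2 : ℝ) : ℂ)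
          + ((inner ℝ ((MeasurableEquiv.toLp 2 (Fin n → ℝ)) v) u : ℝ) : ℂ)
          + Complex.I * ((inner ℝ ((MeasurableEquiv.toLp 2 (Fin n → ℝ)) v) w : ℝ) : ℂ))
      = (∑ j, ((v j : ℂ)) ^ 2) *
          Complex.exp (∑ i, (-(p : ℂ) * (v i) ^ 2 + c i * (v i))) := by
    intro v
    have hcoord : ∀ i, ((MeasurableEquiv.toLp 2 (Fin n → ℝ)) v) i = v i := fun i => rfl
    rw [euclid_norm_sq, euclid_inner, euclid_inner]
    simp only [hcoord]
    congr 1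
    · push_cast
      rfl
    · rw [show ∑ i, (-(p : ℂ) * (v i) ^ 2 + c i * (v i))
          = -(p:ℂ) * (∑ i, ((v i : ℂ)) ^ 2) + (∑ i, ((v i : ℝ):ℂ) * u i)
            + Complex.I * (∑ i, ((v i : ℝ):ℂ) * w i) by
        simp only [hc, Finset.mul_sum, ← Finset.sum_add_distrib]
        apply Finset.sum_congr rfl
        intro i _
        ring]
      congr 1
      push_cast
      ring
  try simp only [Function.comp_def]
  simp_rw [hfun]
  rw [key_pi n hp c, hSsum]
  ring

set_option maxHeartbeats 1000000 in
/-- The bound on the leading-order matrix entries `b_T(γ,γ',t)` from Section 2 of the paper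
(without normalizing prefactors). -/
theorem gaussian_bT_bound (n : ℕ) (hn : 1 ≤ n) :
    ∃ C : ℝ, 0 < C ∧
      ∀ (ξ₁ ξ₂ : EuclideanSpace ℝ (Fin n)), ξ₁ ≠ 0 → ξ₂ ≠ 0 →
        ∀ x₁ x₂ : EuclideanSpace ℝ (Fin n),
          ‖∫ x, ((‖ξ₂‖ ^ 2 * ‖x - x₂‖ ^ 2 : ℝ) : ℂ) * Complex.exp
              (Complex.I * ((inner ℝ (x - x₂) ξ₂ : ℝ) : ℂ)
                - Complex.I * ((inner ℝ (x - x₁) ξ₁ : ℝ) : ℂ)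
                - ((‖ξ₂‖ * ‖x - x₂‖ ^ 2 : ℝ) : ℂ) - ((‖ξ₁‖ * ‖x - x₁‖ ^ 2 : ℝ) : ℂ))‖ ≤
            C * (Real.pi / (‖ξ₁‖ + ‖ξ₂‖)) ^ ((n : ℝ) / 2) *
              (‖ξ₁ - ξ₂‖ ^ 2 + ‖ξ₁‖ * ‖ξ₂‖ * ‖x₁ - x₂‖ ^ 2 + ‖ξ₂‖) *
              Real.exp (-‖ξ₂ - ξ₁‖ ^ 2 / (4 * (‖ξ₁‖ + ‖ξ₂‖))) *
              Real.exp (-(‖ξ₁‖ * ‖ξ₂‖ / (‖ξ₁‖ + ‖ξ₂‖)) * ‖x₂ - x₁‖ ^ 2) := by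
  refine ⟨n, by exact_mod_cast Nat.pos_of_ne_zero (by omega), ?_⟩
  intro ξ₁ ξ₂ hξ₁ hξ₂ x₁ x₂
  have ha : 0 < ‖ξ₁‖ := norm_pos_iff.mpr hξ₁
  have hb : 0 < ‖ξ₂‖ := norm_pos_iff.mpr hξ₂
  set a : ℝ := ‖ξ₁‖ with hadef
  set b : ℝ := ‖ξ₂‖ with hbdef
  set p : ℝ := a + b with hpdef
  have hp : 0 < p := by positivity
  set e : EuclideanSpace ℝ (Fin n) := x₂ - x₁ with he
  set δ : EuclideanSpace ℝ (Fin n) := ξ₂ - ξ₁ with hδ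
  set u : EuclideanSpace ℝ (Fin n) := (-(2*a)) • e with hu
  set d : ℂ := -((a * ‖e‖^2 : ℝ) : ℂ) - Complex.I * ((inner ℝ e ξ₁ : ℝ) : ℂ) with hd
  set S : ℂ := ((‖u‖ ^ 2 - ‖δ‖ ^ 2 : ℝ) : ℂ) + 2 * Complex.I * ((inner ℝ u δ : ℝ) : ℂ) with hS
  have hn1 : (1 : ℝ) ≤ n := by exact_mod_cast hn
  -- exact value of the integral
  have hval : (∫ x : EuclideanSpace ℝ (Fin n),
        ((b ^ 2 * ‖x - x₂‖ ^ 2 : ℝ) : ℂ) * Complex.exp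
          (Complex.I * ((inner ℝ (x - x₂) ξ₂ : ℝ) : ℂ)
            - Complex.I * ((inner ℝ (x - x₁) ξ₁ : ℝ) : ℂ)
            - ((b * ‖x - x₂‖ ^ 2 : ℝ) : ℂ) - ((a * ‖x - x₁‖ ^ 2 : ℝ) : ℂ)))
      = ((b ^ 2 : ℝ) : ℂ) * Complex.exp d *
        ((S / (4 * p ^ 2) + n / (2 * p)) *
          (((Real.pi / p : ℂ)) ^ (1/2 : ℂ)) ^ n * Complex.exp (S / (4 * p))) := by
    rw [← integral_add_right_eq_self (fun x : EuclideanSpace ℝ (Fin n) =>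
        ((b ^ 2 * ‖x - x₂‖ ^ 2 : ℝ) : ℂ) * Complex.exp
          (Complex.I * ((inner ℝ (x - x₂) ξ₂ : ℝ) : ℂ)
            - Complex.I * ((inner ℝ (x - x₁) ξ₁ : ℝ) : ℂ)
            - ((b * ‖x - x₂‖ ^ 2 : ℝ) : ℂ) - ((a * ‖x - x₁‖ ^ 2 : ℝ) : ℂ))) x₂]
    have hpt : ∀ y : EuclideanSpace ℝ (Fin n),
        ((b ^ 2 * ‖y + x₂ - x₂‖ ^ 2 : ℝ) : ℂ) * Complex.exp
          (Complex.I * ((inner ℝ (y + x₂ - x₂) ξ₂ : ℝ) : ℂ)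
            - Complex.I * ((inner ℝ (y + x₂ - x₁) ξ₁ : ℝ) : ℂ)
            - ((b * ‖y + x₂ - x₂‖ ^ 2 : ℝ) : ℂ) - ((a * ‖y + x₂ - x₁‖ ^ 2 : ℝ) : ℂ))
        = ((b ^ 2 : ℝ) : ℂ) * Complex.exp d *
          (((‖y‖ ^ 2 : ℝ) : ℂ) * Complex.exp (-(p : ℂ) * ((‖y‖ ^ 2 : ℝ) : ℂ)
            + ((inner ℝ y u : ℝ) : ℂ) + Complex.I * ((inner ℝ y δ : ℝ) : ℂ))) := by
      intro y
      have h1 : y + x₂ - x₂ = y := add_sub_cancel_right y x₂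
      have h2 : y + x₂ - x₁ = y + e := by rw [he, add_sub_assoc]
      rw [h1, h2]
      have hnrm : ‖y + e‖ ^ 2 = ‖y‖ ^ 2 + 2 * (inner ℝ y e : ℝ) + ‖e‖ ^ 2 :=
        norm_add_sq_real y e
      have hinn1 : (inner ℝ (y + e) ξ₁ : ℝ) = (inner ℝ y ξ₁ : ℝ) + (inner ℝ e ξ₁ : ℝ) :=
        inner_add_left y e ξ₁
      have hinnu : (inner ℝ y u : ℝ) = -(2*a) * (inner ℝ y e : ℝ) := real_inner_smul_right y e _
      have hinnδ : (inner ℝ y δ : ℝ) = (inner ℝ y ξ₂ : ℝ) - (inner ℝ y ξ₁ : ℝ) :=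
        inner_sub_right y ξ₂ ξ₁
      have hX : Complex.I * ((inner ℝ y ξ₂ : ℝ) : ℂ) - Complex.I * ((inner ℝ (y + e) ξ₁ : ℝ) : ℂ)
          - ((b * ‖y‖ ^ 2 : ℝ) : ℂ) - ((a * ‖y + e‖ ^ 2 : ℝ) : ℂ)
          = (-(p : ℂ) * ((‖y‖ ^ 2 : ℝ) : ℂ) + ((inner ℝ y u : ℝ) : ℂ)
            + Complex.I * ((inner ℝ y δ : ℝ) : ℂ)) + d := by
        rw [hnrm, hinn1, hinnu, hinnδ, hd, hpdef]
        push_cast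
        ring
      rw [hX, Complex.exp_add]
      push_cast
      ring
    simp only [hpt]
    rw [integral_const_mul, key_euclid n hp u δ S hS]
  -- pass to norms
  have hdre : d.re = -(a * ‖e‖ ^ 2) := by
    simp [hd, Complex.sub_re, Complex.mul_re, ← Complex.ofReal_pow]
  have hu2 : ‖u‖ ^ 2 = 4 * a ^ 2 * ‖e‖ ^ 2 := by
    rw [hu, norm_smul, Real.norm_eq_abs, abs_neg, abs_of_pos (by positivity : (0:ℝ) < 2*a)]
    ring
  have hSre : S.re = ‖u‖ ^ 2 - ‖δ‖ ^ 2 := by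
    simp [hS, Complex.add_re, Complex.mul_re, ← Complex.ofReal_pow]
  have hre2 : (S / (4 * (p : ℂ))).re = (‖u‖ ^ 2 - ‖δ‖ ^ 2) / (4 * p) := by
    rw [show (4 * (p : ℂ)) = ((4 * p : ℝ) : ℂ) by push_cast; ring, Complex.div_ofReal_re, hSre]
  rw [hval]
  have hnn : ∀ x : ℝ, 0 < x → ‖((x : ℝ) : ℂ)‖ = x := fun x hx => by
    rw [Complex.norm_real, Real.norm_eq_abs, abs_of_pos hx]
  have hPn : ‖(((Real.pi / p : ℂ)) ^ (1/2 : ℂ)) ^ n‖ = (Real.pi / p) ^ ((n : ℝ) / 2) := by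
    rw [norm_pow, show ((Real.pi : ℂ) / (p : ℂ)) = ((Real.pi / p : ℝ) : ℂ) by push_cast; ring]
    rw [Complex.norm_cpow_eq_rpow_re_of_pos (by positivity)]
    rw [show ((1:ℂ)/2).re = (1/2 : ℝ) by norm_num]
    rw [← Real.rpow_natCast ((Real.pi / p) ^ ((1:ℝ)/2)) n, ← Real.rpow_mul (by positivity)]
    congr 1
    ring
  rw [norm_mul, norm_mul, norm_mul, norm_mul, hnn _ (by positivity), hPn,
    Complex.norm_exp, Complex.norm_exp, hdre, hre2, hu2]
  -- the exponential identity
  have hexp : Real.exp (-(a * ‖e‖ ^ 2)) * Real.exp ((4 * a ^ 2 * ‖e‖ ^ 2 - ‖δ‖ ^ 2) / (4 * p))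
      = Real.exp (-‖δ‖ ^ 2 / (4 * p)) * Real.exp (-(a * b / p) * ‖e‖ ^ 2) := by
    rw [← Real.exp_add, ← Real.exp_add]
    congr 1
    rw [hpdef]
    field_simp
    ring
  -- the polynomial bound
  have hSnorm : ‖S‖ ≤ 2 * ‖δ‖ ^ 2 + 8 * a ^ 2 * ‖e‖ ^ 2 := by
    have h1 : ‖S‖ ≤ |‖u‖ ^ 2 - ‖δ‖ ^ 2| + 2 * |(inner ℝ u δ : ℝ)| := by
      refine (norm_add_le _ _).trans ?_
      rw [Complex.norm_real, Real.norm_eq_abs]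
      gcongr
      rw [show (2 : ℂ) * Complex.I * ((inner ℝ u δ : ℝ) : ℂ)
          = Complex.I * (((2 * (inner ℝ u δ : ℝ) : ℝ)) : ℂ) by push_cast; ring]
      rw [norm_mul, Complex.norm_I, one_mul, Complex.norm_real, Real.norm_eq_abs, abs_mul]
      rw [abs_of_pos (by norm_num : (0:ℝ) < 2)]
    have h2 : |(inner ℝ u δ : ℝ)| ≤ ‖u‖ * ‖δ‖ := abs_real_inner_le_norm u δ
    have h3 : |‖u‖ ^ 2 - ‖δ‖ ^ 2| ≤ ‖u‖ ^ 2 + ‖δ‖ ^ 2 := by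
      rw [abs_sub_le_iff]
      constructor <;> nlinarith [sq_nonneg ‖u‖, sq_nonneg ‖δ‖]
    nlinarith [sq_nonneg (‖u‖ - ‖δ‖), hu2, norm_nonneg u, norm_nonneg δ]
  have hWnorm : ‖S / (4 * (p:ℂ) ^ 2) + (n : ℂ) / (2 * (p:ℂ))‖ ≤ ‖S‖ / (4 * p ^ 2) + n / (2 * p) := by
    refine (norm_add_le _ _).trans ?_
    rw [norm_div, norm_div, show (4 * (p:ℂ) ^ 2) = ((4 * p ^ 2 : ℝ) : ℂ) by push_cast; ring,
      show (2 * (p:ℂ)) = ((2 * p : ℝ) : ℂ) by push_cast; ring, hnn _ (by positivity),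
      hnn _ (by positivity), Complex.norm_natCast]
  have hbp : b ≤ p := by rw [hpdef]; linarith
  have hb2p : b ^ 2 ≤ p ^ 2 := by nlinarith
  have hab2 : 2 * a * b ≤ p ^ 2 := by rw [hpdef]; nlinarith [sq_nonneg (a - b), sq_nonneg (a + b)]
  have hD : (0:ℝ) ≤ ‖δ‖ ^ 2 := sq_nonneg _
  have hE : (0:ℝ) ≤ ‖e‖ ^ 2 := sq_nonneg _
  have hWbound : b ^ 2 * ‖S / (4 * (p:ℂ) ^ 2) + (n : ℂ) / (2 * (p:ℂ))‖
      ≤ n * (‖δ‖ ^ 2 + a * b * ‖e‖ ^ 2 + b) := by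
    have c1 : (2 * b ^ 2 * ‖δ‖ ^ 2) / (4 * p ^ 2) ≤ n * ‖δ‖ ^ 2 := by
      rw [div_le_iff₀ (by positivity)]
      nlinarith [mul_le_mul_of_nonneg_right hb2p hD,
        mul_nonneg (mul_nonneg (sub_nonneg.mpr hn1) (sq_nonneg p)) hD]
    have c2 : (8 * a ^ 2 * b ^ 2 * ‖e‖ ^ 2) / (4 * p ^ 2) ≤ n * (a * b * ‖e‖ ^ 2) := by
      rw [div_le_iff₀ (by positivity)]
      have h1 : 4 * (a * b * ‖e‖ ^ 2) * (2 * a * b) ≤ 4 * (a * b * ‖e‖ ^ 2) * p ^ 2 :=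
        mul_le_mul_of_nonneg_left hab2 (by positivity)
      have h2 : (0:ℝ) ≤ (n - 1) * (4 * (a * b * ‖e‖ ^ 2) * p ^ 2) :=
        mul_nonneg (sub_nonneg.mpr hn1) (by positivity)
      nlinarith [h1, h2]
    have c3 : (b ^ 2 * n) / (2 * p) ≤ n * b := by
      rw [div_le_iff₀ (by positivity)]
      have h1 : (n:ℝ) * b * b ≤ (n:ℝ) * b * (2 * p) :=
        mul_le_mul_of_nonneg_left (by linarith) (by positivity)
      nlinarith [h1]
    calc b ^ 2 * ‖S / (4 * (p:ℂ) ^ 2) + (n : ℂ) / (2 * (p:ℂ))‖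
        ≤ b ^ 2 * (‖S‖ / (4 * p ^ 2) + n / (2 * p)) :=
          mul_le_mul_of_nonneg_left hWnorm (by positivity)
      _ ≤ b ^ 2 * ((2 * ‖δ‖ ^ 2 + 8 * a ^ 2 * ‖e‖ ^ 2) / (4 * p ^ 2) + n / (2 * p)) := by
          gcongr
      _ = (2 * b ^ 2 * ‖δ‖ ^ 2) / (4 * p ^ 2) + (8 * a ^ 2 * b ^ 2 * ‖e‖ ^ 2) / (4 * p ^ 2)
            + (b ^ 2 * n) / (2 * p) := by ring
      _ ≤ n * ‖δ‖ ^ 2 + n * (a * b * ‖e‖ ^ 2) + n * b := by linarith [c1, c2, c3]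
      _ = n * (‖δ‖ ^ 2 + a * b * ‖e‖ ^ 2 + b) := by ring
  calc b ^ 2 * Real.exp (-(a * ‖e‖ ^ 2)) *
        (‖S / (4 * (p:ℂ) ^ 2) + (n : ℂ) / (2 * (p:ℂ))‖ * (Real.pi / p) ^ ((n : ℝ) / 2) *
          Real.exp ((4 * a ^ 2 * ‖e‖ ^ 2 - ‖δ‖ ^ 2) / (4 * p)))
      = (b ^ 2 * ‖S / (4 * (p:ℂ) ^ 2) + (n : ℂ) / (2 * (p:ℂ))‖ : ℝ) *
          ((Real.pi / p) ^ ((n : ℝ) / 2)) *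
          (Real.exp (-(a * ‖e‖ ^ 2)) * Real.exp ((4 * a ^ 2 * ‖e‖ ^ 2 - ‖δ‖ ^ 2) / (4 * p))) := by
        ring
    _ = (b ^ 2 * ‖S / (4 * (p:ℂ) ^ 2) + (n : ℂ) / (2 * (p:ℂ))‖ : ℝ) *
          ((Real.pi / p) ^ ((n : ℝ) / 2)) *
          (Real.exp (-‖δ‖ ^ 2 / (4 * p)) * Real.exp (-(a * b / p) * ‖e‖ ^ 2)) := by
        rw [hexp]
    _ ≤ (n * (‖δ‖ ^ 2 + a * b * ‖e‖ ^ 2 + b)) * ((Real.pi / p) ^ ((n : ℝ) / 2)) *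
          (Real.exp (-‖δ‖ ^ 2 / (4 * p)) * Real.exp (-(a * b / p) * ‖e‖ ^ 2)) := by
        exact mul_le_mul_of_nonneg_right
          (mul_le_mul_of_nonneg_right hWbound (by positivity)) (by positivity)
    _ = (n : ℝ) * (Real.pi / p) ^ ((n : ℝ) / 2) *
          (‖ξ₁ - ξ₂‖ ^ 2 + a * b * ‖x₁ - x₂‖ ^ 2 + b) *
          Real.exp (-‖δ‖ ^ 2 / (4 * p)) * Real.exp (-(a * b / p) * ‖e‖ ^ 2) := by
        rw [show ‖ξ₁ - ξ₂‖ = ‖δ‖ by rw [hδ]; exact norm_sub_rev _ _,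
          show ‖x₁ - x₂‖ = ‖e‖ by rw [he]; exact norm_sub_rev _ _]
        ring

end
end
end

section
/- Let n ≥ 1, let λ ≥ 1 be real, and let ε₀ ∈ ℝ^n. Then Σ_{α∈ℤ^n} exp( −|α−ε₀|²/λ ) ≤ (2πλ)^{n/2}. -/
open Real Complex Finset

noncomputable section

lemma summable_exp_neg_sq_int {c : ℝ} (hc : 0 < c) :
    Summable fun k : ℤ => rexp (-c * (k : ℝ) ^ 2) := by
  have key : Summable fun n : ℕ => rexp (-c * (n : ℝ) ^ 2) := by
    refine Summable.of_nonneg_of_le (fun n => (Real.exp_pos _).le) (fun n => ?_)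
      (summable_geometric_of_lt_one (Real.exp_pos (-c)).le
        (Real.exp_lt_one_iff.mpr (by linarith)))
    rw [← Real.exp_nat_mul]
    apply Real.exp_le_exp.mpr
    have : (n : ℝ) ≤ (n : ℝ) ^ 2 := by exact_mod_cast Nat.le_self_pow two_ne_zero n
    nlinarith
  apply Summable.of_nat_of_neg
  · exact_mod_cast key
  · convert key using 2 with n
    push_cast
    · rfl
    · push_cast; ring_nf

lemma theta_sum_le_sqrt_two {c : ℝ} (hc : 2 ≤ c) :
    (∑' k : ℤ, rexp (-c * (k : ℝ) ^ 2)) ≤ Real.sqrt 2 := by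
  have hc0 : 0 < c := by linarith
  set r : ℝ := rexp (-c) with hr
  have hr0 : 0 ≤ r := (Real.exp_pos _).le
  have hr1 : r < 1 := Real.exp_lt_one_iff.mpr (by linarith)
  have hrsmall : r ≤ rexp (-2) := Real.exp_le_exp.mpr (by linarith)
  have hgeom : Summable fun n : ℕ => r ^ n := summable_geometric_of_lt_one hr0 hr1
  have le1 : ∀ n : ℕ, rexp (-c * ((n : ℤ) : ℝ) ^ 2) ≤ r ^ n := by
    intro n
    rw [hr, ← Real.exp_nat_mul]
    apply Real.exp_le_exp.mpr
    have : (n : ℝ) ≤ (n : ℝ) ^ 2 := by exact_mod_cast Nat.le_self_pow two_ne_zero n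
    push_cast
    nlinarith
  have le2 : ∀ n : ℕ, rexp (-c * ((-((n : ℤ) + 1) : ℤ) : ℝ) ^ 2) ≤ r * r ^ n := by
    intro n
    rw [hr, ← pow_succ', ← Real.exp_nat_mul]
    apply Real.exp_le_exp.mpr
    have h : ((n : ℝ) + 1) ≤ ((n : ℝ) + 1) ^ 2 := by
      nlinarith [Nat.cast_nonneg (α := ℝ) n]
    push_cast
    nlinarith
  have h1 : Summable fun n : ℕ => rexp (-c * ((n : ℤ) : ℝ) ^ 2) :=
    Summable.of_nonneg_of_le (fun n => (Real.exp_pos _).le) le1 hgeom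
  have h2 : Summable fun n : ℕ => rexp (-c * ((-((n : ℤ) + 1) : ℤ) : ℝ) ^ 2) :=
    Summable.of_nonneg_of_le (fun n => (Real.exp_pos _).le) le2 (hgeom.mul_left r)
  have hsplit := tsum_of_nat_of_neg_add_one
    (f := fun k : ℤ => rexp (-c * (k : ℝ) ^ 2)) h1 h2
  rw [hsplit]
  have hgeomsum : (∑' n : ℕ, r ^ n) = (1 - r)⁻¹ := tsum_geometric_of_lt_one hr0 hr1
  have b1 : (∑' n : ℕ, rexp (-c * ((n : ℤ) : ℝ) ^ 2)) ≤ (1 - r)⁻¹ := by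
    rw [← hgeomsum]; exact Summable.tsum_le_tsum le1 h1 hgeom
  have b2 : (∑' n : ℕ, rexp (-c * ((-((n : ℤ) + 1) : ℤ) : ℝ) ^ 2)) ≤ r * (1 - r)⁻¹ := by
    rw [← hgeomsum, ← tsum_mul_left]; exact Summable.tsum_le_tsum le2 h2 (hgeom.mul_left r)
  have hsqrt2 : (1.414 : ℝ) ≤ Real.sqrt 2 := by
    have : (1.414 : ℝ) = Real.sqrt (1.414 ^ 2) := (Real.sqrt_sq (by norm_num)).symm
    rw [this]
    exact Real.sqrt_le_sqrt (by norm_num)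
  have hexp2 : rexp (-2) ≤ 0.14 := by
    rw [Real.exp_neg, show (2:ℝ) = 1 + 1 by norm_num, Real.exp_add]
    have h1 := Real.exp_one_gt_d9
    rw [inv_le_comm₀ (by positivity) (by norm_num)]
    nlinarith
  have hrr : r ≤ 0.14 := le_trans hrsmall hexp2
  have h1r : (0:ℝ) < 1 - r := by linarith
  have hinv : (1 - r)⁻¹ + r * (1 - r)⁻¹ ≤ 1.414 := by
    rw [show (1 - r)⁻¹ + r * (1 - r)⁻¹ = (1 + r) / (1 - r) by field_simp,
      div_le_iff₀ h1r]
    nlinarith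
  linarith

lemma summable_exp_shift (lam t : ℝ) (hlam : 0 < lam) :
    Summable fun k : ℤ => rexp (-((k : ℝ) - t) ^ 2 / lam) := by
  refine Summable.of_nonneg_of_le (fun k => (Real.exp_pos _).le) (fun k => ?_)
    (((summable_exp_neg_sq_int (c := 1 / (2 * lam)) (by positivity)).mul_left
      (rexp (t ^ 2 / lam))))
  rw [← Real.exp_add]
  apply Real.exp_le_exp.mpr
  have key : -((k : ℝ) - t) ^ 2 / lam - (t ^ 2 / lam + -(1 / (2 * lam)) * (k : ℝ) ^ 2)
      = -(((k : ℝ) - 2 * t) ^ 2) / (2 * lam) := by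
    field_simp
    ring
  nlinarith [sq_nonneg ((k : ℝ) - 2 * t), mul_pos (two_pos (α := ℝ)) hlam,
    div_nonpos_of_nonpos_of_nonneg (neg_nonpos_of_nonneg (sq_nonneg ((k : ℝ) - 2 * t)))
      (by positivity : (0:ℝ) ≤ 2 * lam), key.ge, key.le]

lemma one_dim_bound (lam t : ℝ) (hlam : 1 ≤ lam) :
    (∑' k : ℤ, rexp (-((k : ℝ) - t) ^ 2 / lam)) ≤ Real.sqrt (2 * π * lam) := by
  have hl0 : 0 < lam := by linarith
  have hπ : (0:ℝ) < π := Real.pi_pos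
  have hπl : (0:ℝ) < π * lam := by positivity
  set a : ℝ := (π * lam)⁻¹ with ha_def
  have ha : 0 < a := by positivity
  set b : ℝ := t / (π * lam) with hb_def
  have key := Complex.tsum_exp_neg_quadratic (a := (a : ℂ)) (by simpa using ha) (b : ℂ)
  set e : ℝ := rexp (t ^ 2 / lam) with he_def
  have he : 0 < e := Real.exp_pos _
  set S : ℝ := ∑' k : ℤ, rexp (-((k : ℝ) - t) ^ 2 / lam) with hS_def
  have hS0 : 0 ≤ S := tsum_nonneg fun k => (Real.exp_pos _).le
  set c : ℝ := π ^ 2 * lam with hc_def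
  have hc2 : 2 ≤ c := by nlinarith [Real.pi_gt_three]
  set Θ : ℝ := ∑' k : ℤ, rexp (-c * (k : ℝ) ^ 2) with hΘ_def
  have hΘ0 : 0 ≤ Θ := tsum_nonneg fun k => (Real.exp_pos _).le
  -- LHS of Poisson identity
  have hterm : ∀ k : ℤ, Complex.exp (-(π:ℂ) * (a:ℂ) * (k:ℂ) ^ 2 + 2 * (π:ℂ) * (b:ℂ) * (k:ℂ))
      = ((e * rexp (-((k : ℝ) - t) ^ 2 / lam) : ℝ) : ℂ) := by
    intro k
    have harg : -(π:ℂ) * (a:ℂ) * (k:ℂ) ^ 2 + 2 * (π:ℂ) * (b:ℂ) * (k:ℂ)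
        = ((t ^ 2 / lam + -((k : ℝ) - t) ^ 2 / lam : ℝ) : ℂ) := by
      rw [ha_def, hb_def]
      push_cast
      have h1 : (π : ℂ) ≠ 0 := by exact_mod_cast hπ.ne'
      have h2 : (lam : ℂ) ≠ 0 := by exact_mod_cast hl0.ne'
      field_simp
      ring
    rw [harg, he_def, ← Real.exp_add, Complex.ofReal_exp]
  have hLHS : (∑' k : ℤ, Complex.exp (-(π:ℂ) * (a:ℂ) * (k:ℂ) ^ 2 + 2 * (π:ℂ) * (b:ℂ) * (k:ℂ)))
      = ((e * S : ℝ) : ℂ) := by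
    rw [funext hterm, ← Complex.ofReal_tsum]
    norm_cast
    exact tsum_mul_left
  -- norms of the RHS terms
  have hnorm : ∀ k : ℤ, ‖Complex.exp (-(π:ℂ) / (a:ℂ) * ((k:ℂ) + Complex.I * (b:ℂ)) ^ 2)‖
      = e * rexp (-c * (k : ℝ) ^ 2) := by
    intro k
    rw [Complex.norm_exp]
    have hre : (-(π:ℂ) / (a:ℂ) * ((k:ℂ) + Complex.I * (b:ℂ)) ^ 2).re
        = -(π / a) * ((k : ℝ) ^ 2 - b ^ 2) := by
      have h1 : -(π:ℂ) / (a:ℂ) = ((-(π / a) : ℝ) : ℂ) := by push_cast; ring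
      rw [h1, Complex.re_ofReal_mul]
      congr 1
      simp [pow_two, Complex.add_re, Complex.mul_re, Complex.add_im, Complex.mul_im]
    rw [hre, he_def, ← Real.exp_add]
    congr 1
    rw [ha_def, hb_def, hc_def]
    field_simp
    ring
  have hΘsum : Summable fun k : ℤ => e * rexp (-c * (k : ℝ) ^ 2) :=
    (summable_exp_neg_sq_int (by linarith : (0:ℝ) < c)).mul_left e
  have hnorm_sum : Summable fun k : ℤ =>
      ‖Complex.exp (-(π:ℂ) / (a:ℂ) * ((k:ℂ) + Complex.I * (b:ℂ)) ^ 2)‖ := by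
    rw [funext hnorm]; exact hΘsum
  -- |1/a^(1/2)|
  have habs : ‖1 / (a:ℂ) ^ (1/2 : ℂ)‖ = (π * lam) ^ (1/2 : ℝ) := by
    rw [one_div, norm_inv, Complex.norm_cpow_eq_rpow_re_of_pos ha]
    have h12 : ((1/2 : ℂ)).re = (1/2 : ℝ) := by norm_num
    rw [h12, ha_def, Real.inv_rpow hπl.le, inv_inv]
  -- put it together
  have hmain : e * S ≤ (π * lam) ^ (1/2 : ℝ) * (e * Θ) := by
    have h1 : ‖((e * S : ℝ) : ℂ)‖ = e * S := by
      rw [Complex.norm_real, Real.norm_of_nonneg (mul_nonneg he.le hS0)]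
    calc e * S = ‖((e * S : ℝ) : ℂ)‖ := h1.symm
      _ = ‖(1 / (a:ℂ) ^ (1/2 : ℂ)) *
            ∑' k : ℤ, Complex.exp (-(π:ℂ) / (a:ℂ) * ((k:ℂ) + Complex.I * (b:ℂ)) ^ 2)‖ := by
          rw [← hLHS, key]
      _ = ‖1 / (a:ℂ) ^ (1/2 : ℂ)‖ *
            ‖∑' k : ℤ, Complex.exp (-(π:ℂ) / (a:ℂ) * ((k:ℂ) + Complex.I * (b:ℂ)) ^ 2)‖ := by
          rw [norm_mul]
      _ ≤ (π * lam) ^ (1/2 : ℝ) * (e * Θ) := by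
          rw [habs]
          apply mul_le_mul_of_nonneg_left _ (by positivity)
          calc ‖∑' k : ℤ, Complex.exp (-(π:ℂ) / (a:ℂ) * ((k:ℂ) + Complex.I * (b:ℂ)) ^ 2)‖
              ≤ ∑' k : ℤ, ‖Complex.exp (-(π:ℂ) / (a:ℂ) * ((k:ℂ) + Complex.I * (b:ℂ)) ^ 2)‖ :=
                norm_tsum_le_tsum_norm hnorm_sum
            _ = ∑' k : ℤ, e * rexp (-c * (k : ℝ) ^ 2) := by rw [funext hnorm]
            _ = e * Θ := tsum_mul_left
  have hSle : S ≤ (π * lam) ^ (1/2 : ℝ) * Θ := by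
    have := hmain
    rw [show (π * lam) ^ (1/2 : ℝ) * (e * Θ) = e * ((π * lam) ^ (1/2 : ℝ) * Θ) by ring] at this
    exact le_of_mul_le_mul_left this he
  calc S ≤ (π * lam) ^ (1/2 : ℝ) * Θ := hSle
    _ ≤ (π * lam) ^ (1/2 : ℝ) * Real.sqrt 2 := by
        apply mul_le_mul_of_nonneg_left (theta_sum_le_sqrt_two hc2) (by positivity)
    _ = Real.sqrt (2 * π * lam) := by
        rw [← Real.sqrt_eq_rpow, show 2 * π * lam = 2 * (π * lam) by ring,
          Real.sqrt_mul (by norm_num : (0:ℝ) ≤ 2)]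
        ring

lemma ennreal_tsum_pi_prod : ∀ (n : ℕ) (g : Fin n → ℤ → ENNReal),
    (∑' f : Fin n → ℤ, ∏ i, g i (f i)) = ∏ i, ∑' k : ℤ, g i k := by
  intro n
  induction n with
  | zero =>
    intro g
    simp [tsum_eq_single (default : Fin 0 → ℤ)
      (fun b hb => absurd (Subsingleton.elim b default) hb)]
  | succ m ih =>
    intro g
    rw [← (Fin.consEquiv (fun _ : Fin (m + 1) => ℤ)).tsum_eq, Fin.prod_univ_succ]
    have : ∀ p : ℤ × (Fin m → ℤ),
        (∏ i, g i (Fin.consEquiv (fun _ : Fin (m + 1) => ℤ) p i))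
          = g 0 p.1 * ∏ i : Fin m, g i.succ (p.2 i) := by
      intro p
      rw [Fin.prod_univ_succ]
      simp [Fin.consEquiv]
    rw [funext this]
    rw [show (∑' p : ℤ × (Fin m → ℤ), g 0 p.1 * ∏ i : Fin m, g i.succ (p.2 i))
        = ∑' x : ℤ, ∑' f : Fin m → ℤ, g 0 x * ∏ i : Fin m, g i.succ (f i)
      from ENNReal.tsum_prod' ]
    calc (∑' x : ℤ, ∑' f : Fin m → ℤ, g 0 x * ∏ i : Fin m, g i.succ (f i))
        = ∑' x : ℤ, g 0 x * ∑' f : Fin m → ℤ, ∏ i : Fin m, g i.succ (f i) := by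
          congr 1; funext x; exact ENNReal.tsum_mul_left
      _ = (∑' x : ℤ, g 0 x) * ∑' f : Fin m → ℤ, ∏ i : Fin m, g i.succ (f i) :=
          ENNReal.tsum_mul_right
      _ = (∑' x : ℤ, g 0 x) * ∏ i : Fin m, ∑' k : ℤ, g i.succ k := by
          rw [ih]

/-- The first lattice Gaussian sum estimate of Appendix 2:
`Σ_{α∈ℤ^n} exp(-|α-ε₀|²/λ) ≤ (2πλ)^{n/2}`, uniformly in the offset `ε₀`. -/
theorem lattice_gaussian_sum (n : ℕ) (hn : 1 ≤ n) (lam : ℝ) (hlam : 1 ≤ lam)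
    (ε₀ : EuclideanSpace ℝ (Fin n)) :
    (∑' α : Fin n → ℤ, ENNReal.ofReal
        (Real.exp (-‖(WithLp.equiv 2 (Fin n → ℝ)).symm (fun i => (α i : ℝ)) - ε₀‖ ^ 2 / lam))) ≤
      ENNReal.ofReal ((2 * Real.pi * lam) ^ ((n : ℝ) / 2)) := by
  have hl0 : (0:ℝ) < lam := by linarith
  have h2πl : (0:ℝ) ≤ 2 * π * lam := by positivity
  -- rewrite each term as a product
  have hterm : ∀ α : Fin n → ℤ,
      ENNReal.ofReal
        (Real.exp (-‖(WithLp.equiv 2 (Fin n → ℝ)).symm (fun i => (α i : ℝ)) - ε₀‖ ^ 2 / lam))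
      = ∏ i, ENNReal.ofReal (rexp (-((α i : ℝ) - ε₀ i) ^ 2 / lam)) := by
    intro α
    have hnorm : ‖(WithLp.equiv 2 (Fin n → ℝ)).symm (fun i => (α i : ℝ)) - ε₀‖ ^ 2
        = ∑ i, ((α i : ℝ) - ε₀ i) ^ 2 := by
      rw [EuclideanSpace.norm_eq, Real.sq_sqrt (Finset.sum_nonneg fun i _ => sq_nonneg _)]
      refine Finset.sum_congr rfl fun i _ => ?_
      rw [Real.norm_eq_abs, _root_.sq_abs]
      congr 1
    have hdiv : -(∑ i, ((α i : ℝ) - ε₀ i) ^ 2) / lam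
        = ∑ i, -((α i : ℝ) - ε₀ i) ^ 2 / lam := by
      rw [← Finset.sum_neg_distrib, Finset.sum_div]
    rw [hnorm, hdiv, Real.exp_sum,
      ENNReal.ofReal_prod_of_nonneg (fun i _ => (Real.exp_pos _).le)]
  rw [funext hterm, ennreal_tsum_pi_prod n
    (fun i k => ENNReal.ofReal (rexp (-((k : ℝ) - ε₀ i) ^ 2 / lam)))]
  -- bound each factor
  have hfac : ∀ i : Fin n, (∑' k : ℤ, ENNReal.ofReal (rexp (-((k : ℝ) - ε₀ i) ^ 2 / lam)))
      ≤ ENNReal.ofReal (Real.sqrt (2 * π * lam)) := by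
    intro i
    rw [← ENNReal.ofReal_tsum_of_nonneg (fun k => (Real.exp_pos _).le)
      (summable_exp_shift lam (ε₀ i) hl0)]
    exact ENNReal.ofReal_le_ofReal (one_dim_bound lam (ε₀ i) hlam)
  calc (∏ i : Fin n, ∑' k : ℤ, ENNReal.ofReal (rexp (-((k : ℝ) - ε₀ i) ^ 2 / lam)))
      ≤ ∏ _i : Fin n, ENNReal.ofReal (Real.sqrt (2 * π * lam)) :=
        Finset.prod_le_prod' fun i _ => hfac i
    _ = ENNReal.ofReal ((2 * π * lam) ^ ((n : ℝ) / 2)) := by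
        rw [Finset.prod_const, Finset.card_univ, Fintype.card_fin,
          ← ENNReal.ofReal_pow (Real.sqrt_nonneg _)]
        congr 1
        rw [Real.sqrt_eq_rpow, ← Real.rpow_natCast ((2 * π * lam) ^ (1/2 : ℝ)) n,
          ← Real.rpow_mul h2πl]
        congr 1
        ring
end
end
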